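/- Every positive invertible operator A on a finite-dimensional Hilbert space E can be written as a finite convex combination of operators of the form U*(c₁ ⊕ c₂I)U with U unitary and c₁, c₂ > 0 scalars; more precisely, A is a finite convex combination of operators of the form c·uu* + d·I_E with c, d > 0 and u a unit vector, and each such operator equals U*((c+d) ⊕ dI)U for a suitable unitary U. -/

import Mathlib

open Matrix
open scoped ComplexOrder

abbrev Mat (d : ℕ) := Matrix (Fin d) (Fin d) ℂ

open scoped InnerProductSpace

lemma aux_sum (n : ℕ) (V : Mat n) (d : Fin n → ℂ) :
    V * Matrix.diagonal d * Vᴴ =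
      ∑ j, d j • Matrix.vecMulVec (fun i => V i j) (star (fun i => V i j)) := by
  have h1 : V * Matrix.diagonal d = Matrix.of fun i j => V i j * d j := by
    ext i j; simp [Matrix.mul_diagonal]
  rw [h1]
  ext i k
  simp only [Matrix.mul_apply, Matrix.of_apply, Matrix.conjTranspose_apply,
    Matrix.sum_apply, Matrix.smul_apply, Matrix.vecMulVec_apply, Pi.star_apply,
    smul_eq_mul]
  exact Finset.sum_congr rfl fun j _ => by ring

lemma aux_complete (n : ℕ) (V : Mat n) (hV : V * Vᴴ = 1) :
    ∑ j, Matrix.vecMulVec (fun i => V i j) (star (fun i : Fin n => V i j)) = 1 := by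
  have := aux_sum n V (fun _ => 1)
  simp only [Matrix.diagonal_one, mul_one, one_smul] at this
  rw [← this, hV]

/-- every positive invertible operator `A` on a finite-dimensional
Hilbert space `E` is a finite convex combination of operators of the form
`c·uuᴴ + d·I` with `c, d > 0` and `u` a unit vector; moreover each such
operator `c·uuᴴ + d·I` equals `Uᴴ ((c+d) ⊕ d·I) U` for a suitable unitary `U`. -/
theorem stmt8 (n : ℕ) (hn : 0 < n) (A : Mat n) (hA : A.PosDef) :
    (∃ (m : ℕ) (t c e : Fin m → ℝ) (u : Fin m → (Fin n → ℂ)),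
      (∀ j, 0 < t j) ∧ (∑ j, t j = 1) ∧ (∀ j, 0 < c j) ∧ (∀ j, 0 < e j) ∧
      (∀ j, star (u j) ⬝ᵥ u j = 1) ∧
      A = ∑ j, (t j : ℂ) •
        ((c j : ℂ) • Matrix.vecMulVec (u j) (star (u j)) + (e j : ℂ) • 1)) ∧
    (∀ (c e : ℝ), 0 < c → 0 < e → ∀ u : Fin n → ℂ, star u ⬝ᵥ u = 1 →
      ∃ U ∈ Matrix.unitaryGroup (Fin n) ℂ,
        (c : ℂ) • Matrix.vecMulVec u (star u) + (e : ℂ) • 1 =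
          Uᴴ * Matrix.diagonal
            (fun j => if j = (⟨0, hn⟩ : Fin n) then ((c + e : ℝ) : ℂ) else (e : ℂ)) * U) := by

  have hn' : (n : ℝ) ≠ 0 := Nat.cast_ne_zero.mpr hn.ne'
  constructor
  · -- Part 1
    have hH := hA.isHermitian
    set a := hH.eigenvalues with ha_def
    have ha : ∀ i, 0 < a i := hA.eigenvalues_pos
    set v : Fin n → (Fin n → ℂ) := fun j => ⇑(hH.eigenvectorBasis j) with hv_def
    have hne : (Finset.univ : Finset (Fin n)).Nonempty := ⟨⟨0, hn⟩, Finset.mem_univ _⟩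
    set μ : ℝ := Finset.univ.inf' hne a with hμ_def
    have hμpos : 0 < μ := (Finset.lt_inf'_iff hne).mpr fun i _ => ha i
    set ε : ℝ := μ / 2 with hε_def
    have hεpos : 0 < ε := by positivity
    have hεlt : ∀ i, ε < a i := fun i =>
      lt_of_lt_of_le (by linarith) (Finset.inf'_le a (Finset.mem_univ i))
    have hU := (Matrix.mem_unitaryGroup_iff).mp (hH.eigenvectorUnitary).2
    have hvcol : ∀ j, (fun i => (hH.eigenvectorUnitary : Mat n) i j) = v j := by
      intro j; funext i; simp [hv_def]
    have hspec : A = ∑ j, ((a j : ℂ)) • Matrix.vecMulVec (v j) (star (v j)) := by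
      have h := aux_sum n (hH.eigenvectorUnitary : Mat n) (fun j => (a j : ℂ))
      rw [hH.spectral_theorem, Unitary.conjStarAlgAut_apply]
      simp only [Matrix.star_eq_conjTranspose] at h ⊢
      rw [show Matrix.diagonal (RCLike.ofReal ∘ hH.eigenvalues) =
          Matrix.diagonal (fun j => (a j : ℂ)) from rfl, h]
      exact Finset.sum_congr rfl fun j _ => by rw [hvcol j]
    have hone : ∑ j, Matrix.vecMulVec (v j) (star (v j)) = 1 := by
      have h := aux_complete n (hH.eigenvectorUnitary : Mat n)
        (by rwa [Matrix.star_eq_conjTranspose] at hU)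
      rw [← h]
      exact Finset.sum_congr rfl fun j _ => by rw [hvcol j]
    refine ⟨n, fun _ => (n : ℝ)⁻¹, fun j => n * (a j - ε), fun _ => ε, v,
      fun _ => by positivity, ?_,
      fun j => mul_pos (by exact_mod_cast hn) (by linarith [hεlt j]),
      fun _ => hεpos, ?_, ?_⟩
    · simp [Finset.sum_const, Finset.card_univ]
      field_simp
    · intro j
      have h := orthonormal_iff_ite.mp hH.eigenvectorBasis.orthonormal j j
      simp only [if_pos rfl] at h
      rw [EuclideanSpace.inner_eq_star_dotProduct, dotProduct_comm] at h
      exact h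
    · rw [hspec]
      have key : ∀ j : Fin n, (((n : ℝ)⁻¹ : ℝ) : ℂ) •
          (((n * (a j - ε) : ℝ) : ℂ) • Matrix.vecMulVec (v j) (star (v j)) +
            ((ε : ℝ) : ℂ) • (1 : Mat n)) =
          (((a j - ε : ℝ)) : ℂ) • Matrix.vecMulVec (v j) (star (v j)) +
            (((ε / n : ℝ)) : ℂ) • 1 := by
        intro j
        rw [smul_add, smul_smul, smul_smul]
        congr 2 <;> push_cast <;> field_simp
      rw [Finset.sum_congr rfl fun j _ => key j, Finset.sum_add_distrib]
      have h2 : ∑ _j : Fin n, (((ε / n : ℝ)) : ℂ) • (1 : Mat n) = ((ε : ℝ) : ℂ) • 1 := by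
        rw [Finset.sum_const, Finset.card_univ, Fintype.card_fin,
          ← Nat.cast_smul_eq_nsmul ℂ, smul_smul]
        congr 1
        push_cast
        field_simp
      rw [h2]
      have h3 : ∀ j : Fin n, (((a j - ε : ℝ)) : ℂ) • Matrix.vecMulVec (v j) (star (v j)) =
          ((a j : ℂ)) • Matrix.vecMulVec (v j) (star (v j)) -
            ((ε : ℝ) : ℂ) • Matrix.vecMulVec (v j) (star (v j)) := by
        intro j; push_cast; rw [sub_smul]
      rw [Finset.sum_congr rfl fun j _ => h3 j, Finset.sum_sub_distrib, ← Finset.smul_sum, hone]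
      abel
  · -- Part 2
    intro c e hc he u hu
    classical
    set u' : EuclideanSpace ℂ (Fin n) := (WithLp.equiv 2 _).symm u with hu'_def
    have hu'1 : ⟪u', u'⟫_ℂ = 1 := by
      rw [hu'_def, EuclideanSpace.inner_eq_star_dotProduct, dotProduct_comm]; exact hu
    have horth : Orthonormal ℂ (({(⟨0, hn⟩ : Fin n)} : Set (Fin n)).restrict
        (fun _ : Fin n => u')) := by
      rw [orthonormal_iff_ite]
      rintro ⟨i, hi⟩ ⟨j, hj⟩
      simp only [Set.mem_singleton_iff] at hi hj
      subst hi; subst hj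
      simpa [Set.restrict] using hu'1
    obtain ⟨b, hb⟩ := horth.exists_orthonormalBasis_extension_of_card_eq
      (by simp [finrank_euclideanSpace])
    have hb0 : b ⟨0, hn⟩ = u' := hb _ rfl
    set U : Mat n := Matrix.of (fun j k => (starRingEnd ℂ) (b j k)) with hU_def
    have hUunit : U * Uᴴ = 1 := by
      ext j j'
      have hinner := orthonormal_iff_ite.mp b.orthonormal j j'
      rw [EuclideanSpace.inner_eq_star_dotProduct] at hinner
      simp only [Matrix.mul_apply, Matrix.conjTranspose_apply, hU_def, Matrix.of_apply,
        star_star, Matrix.one_apply]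
      rw [← hinner]
      simp [dotProduct, mul_comm]
    have hmem : U ∈ Matrix.unitaryGroup (Fin n) ℂ := by
      rw [Matrix.mem_unitaryGroup_iff, Matrix.star_eq_conjTranspose]; exact hUunit
    refine ⟨U, hmem, ?_⟩
    have hUU : Uᴴ * U = 1 := by
      rw [← Matrix.star_eq_conjTranspose]
      exact (Matrix.mem_unitaryGroup_iff').mp hmem
    have hcol : ∀ j, (fun i => Uᴴ i j) = ⇑(b j) := by
      intro j; funext i; simp [hU_def, Matrix.conjTranspose_apply]
    have hcol0 : (fun i => Uᴴ i (⟨0, hn⟩ : Fin n)) = u := by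
      rw [hcol, hb0]; rfl
    have hsum := aux_sum n (Uᴴ)
      (fun j => if j = (⟨0, hn⟩ : Fin n) then ((c + e : ℝ) : ℂ) else (e : ℂ))
    rw [Matrix.conjTranspose_conjTranspose] at hsum
    have hcomp : ∑ j, Matrix.vecMulVec (fun i => Uᴴ i j) (star (fun i : Fin n => Uᴴ i j)) = 1 :=
      aux_complete n (Uᴴ) (by rwa [Matrix.conjTranspose_conjTranspose])
    rw [hsum]
    have hsplit : ∀ j : Fin n, ((if j = (⟨0, hn⟩ : Fin n) then ((c + e : ℝ) : ℂ) else (e : ℂ)) •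
        Matrix.vecMulVec (fun i => Uᴴ i j) (star (fun i : Fin n => Uᴴ i j))) =
        (if j = (⟨0, hn⟩ : Fin n) then (c : ℂ) else 0) •
          Matrix.vecMulVec (fun i => Uᴴ i j) (star (fun i : Fin n => Uᴴ i j)) +
        (e : ℂ) • Matrix.vecMulVec (fun i => Uᴴ i j) (star (fun i : Fin n => Uᴴ i j)) := by
      intro j
      split
      · push_cast; rw [add_smul]
      · rw [zero_smul, zero_add]
    rw [Finset.sum_congr rfl fun j _ => hsplit j, Finset.sum_add_distrib,
      ← Finset.smul_sum, hcomp]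
    have hfirst : ∑ j : Fin n, (if j = (⟨0, hn⟩ : Fin n) then (c : ℂ) else 0) •
        Matrix.vecMulVec (fun i => Uᴴ i j) (star (fun i : Fin n => Uᴴ i j)) =
        (c : ℂ) • Matrix.vecMulVec u (star u) := by
      rw [Finset.sum_eq_single (⟨0, hn⟩ : Fin n)]
      · rw [if_pos rfl, hcol0]
      · intro b' _ hb'; rw [if_neg hb', zero_smul]
      · intro h; exact absurd (Finset.mem_univ _) h
    rw [hfirst]
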